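/- Let H be a Hall universal group. Then H is a simple group: H is nontrivial and its only normal subgroups are the trivial subgroup and H itself. -/

import Mathlib

/-- A group `H` is a *Hall universal group* if it is countable, locally finite,
every finite group embeds into it, and any two isomorphic finite subgroups are
conjugate in `H`.  (Philip Hall's universal locally finite group is the unique
such group up to isomorphism.) -/
structure IsHallUniversal (H : Type*) [Group H] : Prop where
  /-- `H` is countable. -/
  countable : Countable H
  /-- `H` is locally finite: every finitely generated subgroup is finite. -/
  locallyFinite : ∀ S : Subgroup H, S.FG → Finite S
  /-- Every finite group embeds into `H`. -/
  embedsFinite : ∀ (G : Type) [Group G] [Finite G], ∃ f : G →* H, Function.Injective f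
  /-- Any two isomorphic finite subgroups of `H` are conjugate in `H`. -/
  conjIso : ∀ A B : Subgroup H, Finite A → Finite B → Nonempty (A ≃* B) →
    ∃ h : H, Subgroup.map (MulAut.conj h).toMonoidHom A = B


section Construction

variable (n m : ℕ)

/-- Shift automorphism of `ZMod n → ZMod m`. -/
def shiftAddAut (k : ZMod n) : (ZMod n → ZMod m) ≃+ (ZMod n → ZMod m) where
  toFun v := fun j => v (j + k)
  invFun v := fun j => v (j - k)
  left_inv v := funext fun j => by simp
  right_inv v := funext fun j => by simp
  map_add' _ _ := rfl

/-- The shift action of `ZMod n` on `ZMod n → ZMod m`, multiplicatively. -/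
def shiftHom : Multiplicative (ZMod n) →* MulAut (Multiplicative (ZMod n → ZMod m)) :=
  MonoidHom.mk' (fun k => AddEquiv.toMultiplicative (shiftAddAut n m k.toAdd))
    (by
      intro a b
      ext v : 1
      show Multiplicative.ofAdd ((shiftAddAut n m (a * b).toAdd) v.toAdd)
        = Multiplicative.ofAdd ((shiftAddAut n m a.toAdd) ((shiftAddAut n m b.toAdd) v.toAdd))
      refine congrArg _ (funext fun j => ?_)
      simp only [shiftAddAut, AddEquiv.coe_mk, Equiv.coe_fn_mk, toAdd_mul]
      exact congrArg v.toAdd (by ring))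

/-- The semidirect product `(ZMod n → ZMod m) ⋊ ZMod n` by the shift action. -/
abbrev ShiftGroup : Type :=
  SemidirectProduct (Multiplicative (ZMod n → ZMod m)) (Multiplicative (ZMod n)) (shiftHom n m)

lemma exists_orders (hn : 2 ≤ n) (hm : 1 ≤ m) :
    ∃ (G : Type) (_ : Group G) (_ : Finite G) (x y : G),
      orderOf x = n ∧ orderOf y = n ∧ orderOf (x * y) = m := by
  haveI : NeZero n := ⟨by omega⟩
  haveI : NeZero m := ⟨by omega⟩
  haveI : Fact (1 < n) := ⟨hn⟩
  haveI : Finite (ShiftGroup n m) :=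
    Finite.of_injective (fun g : ShiftGroup n m => (g.left, g.right))
      (fun g₁ g₂ h => SemidirectProduct.ext (congrArg Prod.fst h) (congrArg Prod.snd h))
  refine ⟨ShiftGroup n m, inferInstance, inferInstance, ?_⟩
  set u : ZMod n → ZMod m := fun i => if i = 1 then -1 else 0 with hu
  set e : ZMod n → ZMod m := fun i => u i - u (i + 1) with he
  set σ : Multiplicative (ZMod n) := Multiplicative.ofAdd 1 with hσ
  set w : ShiftGroup n m := SemidirectProduct.inl (Multiplicative.ofAdd u) with hw
  set z : ShiftGroup n m := SemidirectProduct.inr σ with hz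
  refine ⟨w * z * w⁻¹, SemidirectProduct.inr σ⁻¹, ?_, ?_, ?_⟩
  · have h1 : orderOf (w * z * w⁻¹) = orderOf z := by
      have := orderOf_injective (MulAut.conj w).toMonoidHom (MulAut.conj w).injective z
      simpa using this
    rw [h1, hz, orderOf_injective _ SemidirectProduct.inr_injective,
      hσ, orderOf_ofAdd_eq_addOrderOf, ZMod.addOrderOf_one]
  · rw [orderOf_injective _ SemidirectProduct.inr_injective, orderOf_inv,
      hσ, orderOf_ofAdd_eq_addOrderOf, ZMod.addOrderOf_one]
  · have key : w * z * w⁻¹ * SemidirectProduct.inr σ⁻¹ =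
        SemidirectProduct.inl (Multiplicative.ofAdd e) := by
      rw [hw, hz]
      ext : 1
      · simp only [SemidirectProduct.mul_left, SemidirectProduct.mul_right,
          SemidirectProduct.inv_left, SemidirectProduct.inv_right,
          SemidirectProduct.left_inl, SemidirectProduct.right_inl,
          SemidirectProduct.left_inr, SemidirectProduct.right_inr,
          map_one, map_inv, mul_one, one_mul]
        simp only [inv_one, MulAut.one_apply, mul_one]
        show Multiplicative.ofAdd (u + -(shiftAddAut n m (1 : ZMod n) u)) = Multiplicative.ofAdd e
        refine congrArg _ (funext fun j => ?_)
        show u j + -(u (j + 1)) = e j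
        rw [he]
        exact (sub_eq_add_neg _ _).symm
      · simp only [SemidirectProduct.mul_right, SemidirectProduct.inv_right,
          SemidirectProduct.right_inl, SemidirectProduct.right_inr,
          mul_one, one_mul, inv_one, mul_inv_cancel]
    rw [key, orderOf_injective _ SemidirectProduct.inl_injective,
      orderOf_ofAdd_eq_addOrderOf]
    have he0 : e 0 = 1 := by
      rw [he]
      simp only [hu, zero_add, if_pos rfl, if_neg (zero_ne_one (α := ZMod n)), zero_sub, neg_neg]
    have hd1 : addOrderOf e ∣ m := by
      apply addOrderOf_dvd_of_nsmul_eq_zero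
      funext j
      simp [nsmul_eq_mul, ZMod.natCast_self]
    have hd2 : m ∣ addOrderOf e := by
      have h0 : addOrderOf e • e 0 = 0 := by
        have := addOrderOf_nsmul_eq_zero e
        exact congrFun this 0
      rw [he0] at h0
      have := addOrderOf_dvd_of_nsmul_eq_zero h0
      rwa [ZMod.addOrderOf_one] at this
    exact Nat.dvd_antisymm hd1 hd2

end Construction

section Hall

variable {H : Type*} [Group H]

lemma IsHallUniversal.orderOf_pos (hH : IsHallUniversal H) (g : H) : 0 < orderOf g := by
  haveI : Finite (Subgroup.zpowers g) := by
    apply hH.locallyFinite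
    exact ⟨{g}, by simp [Subgroup.zpowers_eq_closure]⟩
  have h1 : 0 < Nat.card (Subgroup.zpowers g) := Nat.card_pos
  rwa [Nat.card_zpowers] at h1

lemma isCyclic_zpowers (g : H) : IsCyclic (Subgroup.zpowers g) := by
  refine ⟨⟨⟨g, Subgroup.mem_zpowers g⟩, fun x => ?_⟩⟩
  obtain ⟨k, hk⟩ := x.2
  exact ⟨k, Subtype.ext (by simpa using hk)⟩

/-- If `N` is a normal subgroup of a Hall universal group containing an element of
order `d`, then it contains every element of order `d`. -/
lemma IsHallUniversal.mem_of_orderOf_eq (hH : IsHallUniversal H) {N : Subgroup H}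
    (hN : N.Normal) {c c' : H} (hc : c ∈ N) (h : orderOf c' = orderOf c) : c' ∈ N := by
  have fin : ∀ x : H, Finite (Subgroup.zpowers x) := fun x => by
    apply hH.locallyFinite
    exact ⟨{x}, by simp [Subgroup.zpowers_eq_closure]⟩
  haveI := fin c; haveI := fin c'
  haveI := isCyclic_zpowers c; haveI := isCyclic_zpowers c'
  have hcard : Nat.card (Subgroup.zpowers c) = Nat.card (Subgroup.zpowers c') := by
    rw [Nat.card_zpowers, Nat.card_zpowers, h]
  obtain ⟨h₀, hmap⟩ := hH.conjIso (Subgroup.zpowers c) (Subgroup.zpowers c') (fin c) (fin c')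
    ⟨mulEquivOfCyclicCardEq hcard⟩
  have hc' : c' ∈ Subgroup.map (MulAut.conj h₀).toMonoidHom (Subgroup.zpowers c) := by
    rw [hmap]; exact Subgroup.mem_zpowers c'
  obtain ⟨a, ha, hac⟩ := Subgroup.mem_map.1 hc'
  have haN : a ∈ N := Subgroup.zpowers_le_of_mem hc ha
  have : (MulAut.conj h₀) a ∈ N := hN.conj_mem a haN h₀
  simpa [hac] using (hac ▸ this)

theorem hallUniversal_simple'
    (H : Type*) [Group H] (hH : IsHallUniversal H) :
    IsSimpleGroup H := by
  have nt : Nontrivial H := by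
    obtain ⟨f, hf⟩ := hH.embedsFinite (Multiplicative (ZMod 2))
    refine ⟨f (Multiplicative.ofAdd 1), 1, fun hcontra => ?_⟩
    have h1 : f 1 = 1 := map_one f
    have := hf (hcontra.trans h1.symm)
    exact absurd this (by decide)
  refine ⟨fun N hN => ?_⟩
  rcases N.bot_or_exists_ne_one with hbot | ⟨a, haN, ha1⟩
  · exact Or.inl hbot
  right
  rw [Subgroup.eq_top_iff']
  intro g
  set n := orderOf a with hn
  set m := orderOf g with hm
  have hn2 : 2 ≤ n := by
    have h0 := hH.orderOf_pos a
    have h1 : n ≠ 1 := fun h => ha1 (orderOf_eq_one_iff.1 h)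
    omega
  have hm1 : 1 ≤ m := hH.orderOf_pos g
  obtain ⟨G, _, _, x, y, hx, hy, hxy⟩ := exists_orders n m hn2 hm1
  obtain ⟨f, hf⟩ := hH.embedsFinite G
  have hXN : f x ∈ N := hH.mem_of_orderOf_eq hN haN (by rw [orderOf_injective f hf, hx])
  have hYN : f y ∈ N := hH.mem_of_orderOf_eq hN haN (by rw [orderOf_injective f hf, hy])
  have hprod : f x * f y ∈ N := N.mul_mem hXN hYN
  have horder : orderOf g = orderOf (f x * f y) := by
    rw [← map_mul, orderOf_injective f hf, hxy]
  exact hH.mem_of_orderOf_eq hN hprod horder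

end Hall

/-- **`H` is simple.**  A Hall universal group is nontrivial and its only normal
subgroups are the trivial subgroup and the whole group. -/
theorem hallUniversal_simple
    (H : Type*) [Group H] (hH : IsHallUniversal H) :
    IsSimpleGroup H :=
  hallUniversal_simple' H hH
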